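/- Let l, m, n, q ∈ ℝ. The ternary quadratic form with matrix [[12l, 3m, 3m], [3m, 2n, q], [3m, q, 2n]] is positive definite if and only if l > 0 and (3m² - 4ln)/(2l) < q < 2n. -/

import Mathlib

theorem stmt_17 (l m n q : ℝ) :
    (!![12 * l, 3 * m, 3 * m;
        3 * m, 2 * n, q;
        3 * m, q, 2 * n] : Matrix (Fin 3) (Fin 3) ℝ).PosDef ↔
      (0 < l ∧ (3 * m ^ 2 - 4 * l * n) / (2 * l) < q ∧ q < 2 * n) := by
  have elem : ∀ x : Fin 3 → ℝ,
      dotProduct (star x) ((!![12 * l, 3 * m, 3 * m;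
        3 * m, 2 * n, q;
        3 * m, q, 2 * n] : Matrix (Fin 3) (Fin 3) ℝ).mulVec x) =
      12 * l * x 0 ^ 2 + 6 * m * x 0 * (x 1 + x 2) + 2 * n * (x 1 ^ 2 + x 2 ^ 2)
        + 2 * q * x 1 * x 2 := by
    intro x
    simp [dotProduct, Matrix.mulVec, Fin.sum_univ_three, Matrix.cons_val_zero,
      Matrix.cons_val_one, Matrix.head_cons, Matrix.cons_val_two, Matrix.tail_cons,
      Matrix.vecHead, Matrix.vecTail]
    ring
  rw [Matrix.posDef_iff_dotProduct_mulVec]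
  constructor
  · rintro ⟨-, h⟩
    have h1 := @h ![1, 0, 0] (by intro hc; simpa using congrFun hc 0)
    have h2 := @h ![0, 1, -1] (by intro hc; simpa using congrFun hc 1)
    rw [elem] at h1 h2
    simp at h1 h2
    have hl : 0 < l := by linarith
    refine ⟨hl, ?_, by linarith⟩
    have h3 := @h ![-m / (2 * l), 1, 1] (by intro hc; simpa using congrFun hc 1)
    rw [elem] at h3
    simp at h3
    rw [div_lt_iff₀ (by linarith)]
    have hl' : (2 * l) ≠ 0 := by positivity
    have e : -m / (2 * l) * (2 * l) = -m := div_mul_cancel₀ _ hl'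
    nlinarith [mul_pos hl h3, sq_nonneg m, mul_pos hl hl]
  · rintro ⟨hl, hq1, hq2⟩
    have hq1' : 3 * m ^ 2 - 4 * l * n < 2 * l * q := by
      rw [div_lt_iff₀ (by linarith)] at hq1; linarith
    refine ⟨?_, ?_⟩
    · ext i j
      fin_cases i <;> fin_cases j <;>
        simp [Matrix.vecHead, Matrix.vecTail]
    · intro x hx
      rw [elem]
      have hne : x 0 ≠ 0 ∨ x 1 ≠ 0 ∨ x 2 ≠ 0 := by
        by_contra hc
        push_neg at hc
        exact hx (funext fun i => by fin_cases i <;> simp [hc.1, hc.2.1, hc.2.2])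
      have key : 0 < 4 * l * (12 * l * x 0 ^ 2 + 6 * m * x 0 * (x 1 + x 2)
          + 2 * n * (x 1 ^ 2 + x 2 ^ 2) + 2 * q * x 1 * x 2) := by
        have t1 : 0 ≤ 3 * (4*l*(x 0) + m*(x 1 + x 2))^2 := by positivity
        have t2 : 0 ≤ (4*l*n + 2*l*q - 3*m^2) * (x 1 + x 2)^2 :=
          mul_nonneg (by linarith) (sq_nonneg _)
        have t3 : 0 ≤ (2*l*(2*n - q)) * (x 1 - x 2)^2 :=
          mul_nonneg (by nlinarith) (sq_nonneg _)
        rcases eq_or_ne (x 1) (x 2) with hbc | hbc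
        · rcases eq_or_ne (x 1) 0 with hb0 | hb0
          · have ha : x 0 ≠ 0 := by
              rcases hne with h | h | h
              · exact h
              · exact absurd hb0 h
              · exact absurd (hbc ▸ hb0) h
            rw [← hbc, hb0]
            have := mul_pos (mul_pos hl hl) (sq_pos_of_ne_zero ha)
            nlinarith [this]
          · have hs : x 1 + x 2 ≠ 0 := by rw [← hbc]; intro h; apply hb0; linarith
            have t2' : 0 < (4*l*n + 2*l*q - 3*m^2) * (x 1 + x 2)^2 :=
              mul_pos (by linarith) (sq_pos_of_ne_zero hs)
            nlinarith [t1, t2', t3]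
        · have t3' : 0 < (2*l*(2*n - q)) * (x 1 - x 2)^2 :=
            mul_pos (by nlinarith) (sq_pos_of_ne_zero (sub_ne_zero.mpr hbc))
          nlinarith [t1, t2, t3']
      nlinarith [key]
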